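/- arXiv:1903.05162 — 3 statements merged into one kernel-verified Lean document; each statement's English description precedes it below -/
import Mathlib

section
/- Let φ : F → ℝ be locally Lipschitz. Then for every f ∈ F and every g ∈ F, the generalized directional derivative equals the maximum of the pairings over the subdifferential: φ°(f;g) = max { ⟨h,g⟩ : h ∈ ∂φ(f) }, and this maximum is attained. -/
/- Setting: `F` (and `E`) are Fréchet spaces: complete topological vector spaces over ℝ
whose topology is generated by an increasing sequence of seminorms `p 0 ≤ p 1 ≤ ⋯`
(`Monotone p` together with `WithSeminorms p`).  The first seminorm of the family,
written `‖·‖¹` in the paper, is `p 0`.  The dual `F'` with its weak* topology is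
`WeakDual ℝ F`. -/

open Filter Topology

section Defs

variable {E F : Type*}
  [AddCommGroup E] [Module ℝ E] [UniformSpace E] [IsUniformAddGroup E] [ContinuousSMul ℝ E]
  [AddCommGroup F] [Module ℝ F] [UniformSpace F] [IsUniformAddGroup F] [ContinuousSMul ℝ F]

/-- Clarke's generalized directional derivative
`φ°(f;g) = limsup_{h → f, t ↓ 0} (φ(h+tg) − φ(h))/t`. -/
noncomputable def clarkeDeriv (φ : F → ℝ) (f g : F) : ℝ :=
  Filter.limsup (fun q : F × ℝ => (φ (q.1 + q.2 • g) - φ q.1) / q.2)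
    ((𝓝 f) ×ˢ (𝓝[>] (0 : ℝ)))

/-- The Clarke subdifferential `∂φ(f) = {f' ∈ F' : ⟨f',g⟩ ≤ φ°(f;g) ∀ g}`, a subset of
the dual equipped with the weak* topology. -/
def clarkeSubdiff (φ : F → ℝ) (f : F) : Set (WeakDual ℝ F) :=
  {u | ∀ g : F, u g ≤ clarkeDeriv φ f g}

/-- Locally Lipschitz with respect to the first seminorm `p 0` of the defining
increasing family of seminorms (as used throughout the paper). -/
def LocLip (p : ℕ → Seminorm ℝ F) (φ : F → ℝ) : Prop :=
  ∀ x : F, ∃ U ∈ 𝓝 x, ∃ K : ℝ, 0 ≤ K ∧ ∀ a ∈ U, ∀ b ∈ U, |φ a - φ b| ≤ K * (p 0) (a - b)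

/-- The weak* seminorm `ρ_ϕ(y) = sup_{x ∈ ϕ} |y x|` attached to a finite set `ϕ`. -/
noncomputable def dualSeminorm (s : Finset F) (y : WeakDual ℝ F) : ℝ :=
  ⨆ x ∈ s, |y x|

/-- `λ_{φ,ϕ}(f) = min_{y ∈ ∂φ(f)} ρ_ϕ(y)`. -/
noncomputable def lam (φ : F → ℝ) (s : Finset F) (f : F) : ℝ :=
  sInf (dualSeminorm s '' clarkeSubdiff φ f)

/-- The Chang Palais–Smale condition. -/
def ChangPS (φ : F → ℝ) : Prop :=
  ∀ u : ℕ → F, (∃ C : ℝ, ∀ n, |φ (u n)| ≤ C) →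
    (∀ s : Finset F, Tendsto (fun n => lam φ s (u n)) atTop (𝓝 0)) →
    ∃ g : ℕ → ℕ, StrictMono g ∧ ∃ x : F, Tendsto (u ∘ g) atTop (𝓝 x)

/-- The Chang Palais–Smale condition at level `c`. -/
def ChangPSAt (φ : F → ℝ) (c : ℝ) : Prop :=
  ∀ u : ℕ → F, Tendsto (fun n => φ (u n)) atTop (𝓝 c) →
    (∀ s : Finset F, Tendsto (fun n => lam φ s (u n)) atTop (𝓝 0)) →
    ∃ g : ℕ → ℕ, StrictMono g ∧ ∃ x : F, Tendsto (u ∘ g) atTop (𝓝 x)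

/-- Keller `C¹_c` on a set `U`, with derivative family `D`: directional derivatives exist,
each `D x` is continuous linear, and `(x,h) ↦ D x h` is jointly continuous. -/
def C1cOn (τ : E → F) (D : E → (E →L[ℝ] F)) (U : Set E) : Prop :=
  (∀ x ∈ U, ∀ h : E,
      Tendsto (fun t : ℝ => t⁻¹ • (τ (x + t • h) - τ x)) (𝓝[≠] (0 : ℝ)) (𝓝 (D x h))) ∧
  ContinuousOn (fun q : E × E => D q.1 q.2) (U ×ˢ (Set.univ : Set E))

/-- Keller `C¹_c` on a set (derivative existential). -/
def IsC1cOn (τ : E → F) (U : Set E) : Prop :=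
  ∃ D : E → (E →L[ℝ] F), C1cOn τ D U

/-- Local `C¹_c`-diffeomorphism: every point has an open neighbourhood mapped bijectively
onto an open set, `τ` being `C¹_c` there with a `C¹_c` inverse. -/
def IsLocalC1cDiffeo (τ : E → F) : Prop :=
  ∀ x : E, ∃ U : Set E, IsOpen U ∧ x ∈ U ∧ ∃ V : Set F, IsOpen V ∧ Set.BijOn τ U V ∧
    IsC1cOn τ U ∧ ∃ σ : F → E, (∀ y ∈ V, τ (σ y) = y) ∧ (∀ x' ∈ U, σ (τ x') = x') ∧
      IsC1cOn σ V

end Defs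

section ClarkeHelpers

variable {F : Type*}
  [AddCommGroup F] [Module ℝ F] [UniformSpace F] [IsUniformAddGroup F] [ContinuousSMul ℝ F]

private lemma limsup_comp_eq {α β : Type*} (u : β → ℝ) (m : α → β) (l : Filter α) :
    Filter.limsup (fun x => u (m x)) l = Filter.limsup u (Filter.map m l) := by
  rw [Filter.limsup, Filter.limsup, Filter.map_map]; rfl

private lemma limsup_comp_le {α : Type*} {l : Filter α} [l.NeBot] {u : α → ℝ} {m : α → α}
    (hm : Tendsto m l l) {C : ℝ} (hb : ∀ᶠ x in l, |u x| ≤ C) :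
    Filter.limsup (fun x => u (m x)) l ≤ Filter.limsup u l := by
  rw [limsup_comp_eq]
  refine Filter.limsup_le_limsup_of_le hm ?_ ?_
  · refine Filter.IsBoundedUnder.isCoboundedUnder_le ⟨-C, ?_⟩
    rw [Filter.eventually_map, Filter.eventually_map]
    exact (hm.eventually hb).mono fun x hx => neg_le_of_abs_le hx
  · exact Filter.isBoundedUnder_of_eventually_le (hb.mono fun x hx => (abs_le.1 hx).2)

private lemma tendsto_clarke_aux (f g : F) :
    Tendsto (fun q : F × ℝ => q.1 + q.2 • g) ((𝓝 f) ×ˢ (𝓝[>] (0 : ℝ))) (𝓝 f) := by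
  have hs : Tendsto (fun q : F × ℝ => q.2) ((𝓝 f) ×ˢ (𝓝[>] (0 : ℝ))) (𝓝 (0 : ℝ)) :=
    tendsto_snd.mono_right nhdsWithin_le_nhds
  have h := tendsto_fst.add (hs.smul_const g)
  simpa using h

private lemma clarke_bound (p : ℕ → Seminorm ℝ F) (φ : F → ℝ) (hφ : LocLip p φ) (f : F) :
    ∃ K : ℝ, 0 ≤ K ∧ ∀ g : F, ∀ᶠ q in (𝓝 f) ×ˢ (𝓝[>] (0 : ℝ)),
      |(φ (q.1 + q.2 • g) - φ q.1) / q.2| ≤ K * p 0 g := by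
  obtain ⟨U, hU, K, hK, hL⟩ := hφ f
  refine ⟨K, hK, fun g => ?_⟩
  have hU' : ∀ᶠ x in 𝓝 f, x ∈ U := hU
  have e1 : ∀ᶠ q in (𝓝 f) ×ˢ (𝓝[>] (0 : ℝ)), (q : F × ℝ).1 ∈ U := tendsto_fst.eventually hU'
  have e2 : ∀ᶠ q in (𝓝 f) ×ˢ (𝓝[>] (0 : ℝ)), (q : F × ℝ).1 + q.2 • g ∈ U :=
    (tendsto_clarke_aux f g).eventually hU'
  have e3 : ∀ᶠ q in (𝓝 f) ×ˢ (𝓝[>] (0 : ℝ)), (0 : ℝ) < (q : F × ℝ).2 := by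
    have h : ∀ᶠ t in 𝓝[>] (0 : ℝ), t ∈ Set.Ioi (0 : ℝ) := eventually_mem_nhdsWithin
    exact tendsto_snd.eventually h
  filter_upwards [e1, e2, e3] with q h1 h2 h3
  have hb := hL _ h2 _ h1
  rw [add_sub_cancel_left] at hb
  rw [abs_div, abs_of_pos h3, div_le_iff₀ h3]
  calc |φ (q.1 + q.2 • g) - φ q.1| ≤ K * p 0 (q.2 • g) := hb
    _ = K * (|q.2| * p 0 g) := by rw [map_smul_eq_mul, Real.norm_eq_abs]
    _ = K * p 0 g * q.2 := by rw [abs_of_pos h3]; ring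

private lemma clarkeDeriv_zero' (φ : F → ℝ) (f : F) : clarkeDeriv φ f 0 = 0 := by
  have h : (fun q : F × ℝ => (φ (q.1 + q.2 • (0 : F)) - φ q.1) / q.2) = fun _ => (0 : ℝ) := by
    funext q; simp
  rw [clarkeDeriv, h, Filter.limsup_const]

private lemma clarkeDeriv_add_le (p : ℕ → Seminorm ℝ F) (φ : F → ℝ) (hφ : LocLip p φ)
    (f g₁ g₂ : F) :
    clarkeDeriv φ f (g₁ + g₂) ≤ clarkeDeriv φ f g₁ + clarkeDeriv φ f g₂ := by
  obtain ⟨K, hK, hb⟩ := clarke_bound p φ hφ f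
  set L := (𝓝 f) ×ˢ (𝓝[>] (0 : ℝ)) with hLdef
  haveI : L.NeBot := by rw [hLdef]; infer_instance
  set Q : F → F × ℝ → ℝ := fun g q => (φ (q.1 + q.2 • g) - φ q.1) / q.2 with hQ
  set m : F × ℝ → F × ℝ := fun q => (q.1 + q.2 • g₂, q.2) with hm
  have hmt : Tendsto m L L := (tendsto_clarke_aux f g₂).prodMk tendsto_snd
  have key : ∀ q : F × ℝ, Q (g₁ + g₂) q = Q g₁ (m q) + Q g₂ q := by
    intro q
    have h1 : q.1 + q.2 • (g₁ + g₂) = (q.1 + q.2 • g₂) + q.2 • g₁ := by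
      rw [smul_add]; abel
    simp only [hQ, hm]
    rw [h1, ← add_div, sub_add_sub_cancel]
  have hbg1 : ∀ᶠ q in L, |Q g₁ (m q)| ≤ K * p 0 g₁ := hmt.eventually (hb g₁)
  have h1 : Filter.IsBoundedUnder (· ≥ ·) L (fun q => Q g₁ (m q)) :=
    ⟨-(K * p 0 g₁), by
      rw [Filter.eventually_map]
      exact hbg1.mono fun x hx => neg_le_of_abs_le hx⟩
  have h2 : Filter.IsBoundedUnder (· ≤ ·) L (fun q => Q g₁ (m q)) :=
    Filter.isBoundedUnder_of_eventually_le (hbg1.mono fun x hx => (abs_le.1 hx).2)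
  have h4 : Filter.IsBoundedUnder (· ≤ ·) L (Q g₂) :=
    Filter.isBoundedUnder_of_eventually_le ((hb g₂).mono fun x hx => (abs_le.1 hx).2)
  have h3 : Filter.IsCoboundedUnder (· ≤ ·) L (Q g₂) :=
    Filter.IsBoundedUnder.isCoboundedUnder_le
      ⟨-(K * p 0 g₂), by
        rw [Filter.eventually_map]
        exact (hb g₂).mono fun x hx => neg_le_of_abs_le hx⟩
  have e1 : clarkeDeriv φ f (g₁ + g₂) = Filter.limsup ((fun q => Q g₁ (m q)) + Q g₂) L := by
    rw [clarkeDeriv]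
    congr 1
    funext q
    exact key q
  rw [e1]
  calc Filter.limsup ((fun q => Q g₁ (m q)) + Q g₂) L
      ≤ Filter.limsup (fun q => Q g₁ (m q)) L + Filter.limsup (Q g₂) L :=
        limsup_add_le h1 h2 h3 h4
    _ ≤ clarkeDeriv φ f g₁ + clarkeDeriv φ f g₂ :=
        add_le_add (limsup_comp_le hmt (hb g₁)) le_rfl

private lemma clarkeDeriv_smul_le (p : ℕ → Seminorm ℝ F) (φ : F → ℝ) (hφ : LocLip p φ)
    (f : F) {c : ℝ} (hc : 0 < c) (g : F) :
    clarkeDeriv φ f (c • g) ≤ c * clarkeDeriv φ f g := by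
  obtain ⟨K, hK, hb⟩ := clarke_bound p φ hφ f
  set L := (𝓝 f) ×ˢ (𝓝[>] (0 : ℝ)) with hLdef
  haveI : L.NeBot := by rw [hLdef]; infer_instance
  set Q : F → F × ℝ → ℝ := fun g q => (φ (q.1 + q.2 • g) - φ q.1) / q.2 with hQ
  set m : F × ℝ → F × ℝ := fun q => (q.1, c * q.2) with hm
  have hmul : Tendsto (fun t : ℝ => c * t) (𝓝[>] (0 : ℝ)) (𝓝[>] (0 : ℝ)) := by
    apply tendsto_nhdsWithin_of_tendsto_nhds_of_eventually_within
    · have h : Tendsto (fun t : ℝ => c * t) (𝓝 (0 : ℝ)) (𝓝 (c * 0)) :=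
        (continuous_const.mul continuous_id).tendsto 0
      rw [mul_zero] at h
      exact h.mono_left nhdsWithin_le_nhds
    · exact eventually_mem_nhdsWithin.mono fun t ht => mul_pos hc ht
  have hmt : Tendsto m L L := by
    rw [hLdef]
    exact tendsto_fst.prodMk (hmul.comp tendsto_snd)
  have key : ∀ q : F × ℝ, Q (c • g) q = c * Q g (m q) := by
    intro q
    simp only [hQ, hm]
    rw [smul_smul, mul_comm q.2 c, ← mul_div_assoc, mul_div_mul_left _ _ (ne_of_gt hc)]
  have hbb : ∀ᶠ q in L, |Q g (m q)| ≤ K * p 0 g := hmt.eventually (hb g)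
  have h1 : Filter.IsBoundedUnder (· ≤ ·) L (fun q => Q g (m q)) :=
    Filter.isBoundedUnder_of_eventually_le (hbb.mono fun x hx => (abs_le.1 hx).2)
  have h2 : Filter.IsCoboundedUnder (· ≤ ·) L (fun q => Q g (m q)) :=
    Filter.IsBoundedUnder.isCoboundedUnder_le
      ⟨-(K * p 0 g), by
        rw [Filter.eventually_map]
        exact hbb.mono fun x hx => neg_le_of_abs_le hx⟩
  have h3 : Filter.IsBoundedUnder (· ≤ ·) L (fun q => c * Q g (m q)) :=
    Filter.isBoundedUnder_of_eventually_le (hbb.mono fun x hx =>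
      mul_le_mul_of_nonneg_left (abs_le.1 hx).2 hc.le)
  have h4 : Filter.IsCoboundedUnder (· ≤ ·) L (fun q => c * Q g (m q)) :=
    Filter.IsBoundedUnder.isCoboundedUnder_le
      ⟨c * (-(K * p 0 g)), by
        rw [Filter.eventually_map]
        exact hbb.mono fun x hx =>
          mul_le_mul_of_nonneg_left (neg_le_of_abs_le hx) hc.le⟩
  have e2 : c * Filter.limsup (fun q => Q g (m q)) L = Filter.limsup (fun q => c * Q g (m q)) L :=
    (OrderIso.mulLeft₀ c hc).limsup_apply h1 h2 h3 h4
  have e1 : clarkeDeriv φ f (c • g) = Filter.limsup (fun q => c * Q g (m q)) L := by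
    rw [clarkeDeriv]
    congr 1
    funext q
    exact key q
  rw [e1, ← e2]
  exact mul_le_mul_of_nonneg_left (limsup_comp_le hmt (hb g)) hc.le

private lemma clarkeDeriv_smul' (p : ℕ → Seminorm ℝ F) (φ : F → ℝ) (hφ : LocLip p φ)
    (f : F) {c : ℝ} (hc : 0 < c) (g : F) :
    clarkeDeriv φ f (c • g) = c * clarkeDeriv φ f g := by
  refine le_antisymm (clarkeDeriv_smul_le p φ hφ f hc g) ?_
  have h2 := clarkeDeriv_smul_le p φ hφ f (inv_pos.mpr hc) (c • g)
  rw [smul_smul, inv_mul_cancel₀ (ne_of_gt hc), one_smul] at h2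
  calc c * clarkeDeriv φ f g ≤ c * (c⁻¹ * clarkeDeriv φ f (c • g)) :=
        mul_le_mul_of_nonneg_left h2 hc.le
    _ = clarkeDeriv φ f (c • g) := by
        rw [← mul_assoc, mul_inv_cancel₀ (ne_of_gt hc), one_mul]

end ClarkeHelpers
/-- `φ°(f;g) = max {⟨h,g⟩ : h ∈ ∂φ(f)}`, the maximum being attained. -/
theorem clarkeDeriv_eq_max_subdiff
    {F : Type*} [AddCommGroup F] [Module ℝ F] [UniformSpace F] [IsUniformAddGroup F]
    [ContinuousSMul ℝ F] [CompleteSpace F]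
    (p : ℕ → Seminorm ℝ F) (hmono : Monotone p) (hsp : WithSeminorms p)
    (φ : F → ℝ) (hφ : LocLip p φ) (f g : F) :
    IsGreatest ((fun u : WeakDual ℝ F => u g) '' clarkeSubdiff φ f) (clarkeDeriv φ f g) := by
  classical
  obtain ⟨K, hK, hb⟩ := clarke_bound p φ hφ f
  haveI : ((𝓝 f) ×ˢ (𝓝[>] (0 : ℝ))).NeBot := inferInstance
  set N : F → ℝ := clarkeDeriv φ f with hN
  have N_hom : ∀ c : ℝ, 0 < c → ∀ x : F, N (c • x) = c * N x := fun c hc x =>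
    clarkeDeriv_smul' p φ hφ f hc x
  have N_add : ∀ x y : F, N (x + y) ≤ N x + N y := fun x y =>
    clarkeDeriv_add_le p φ hφ f x y
  have N_zero : N 0 = 0 := clarkeDeriv_zero' φ f
  have hNle : ∀ g' : F, N g' ≤ K * p 0 g' := by
    intro g'
    refine Filter.limsup_le_of_le ?_ ((hb g').mono fun x hx => (abs_le.1 hx).2)
    refine Filter.IsBoundedUnder.isCoboundedUnder_le ⟨-(K * p 0 g'), ?_⟩
    rw [Filter.eventually_map]
    exact (hb g').mono fun x hx => neg_le_of_abs_le hx
  have Hsp : ∀ c : ℝ, c • g = 0 → c • N g = 0 := by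
    intro c hcg
    rcases smul_eq_zero.mp hcg with h | h
    · simp [h]
    · rw [h, N_zero, smul_zero]
  have hfd : ∀ x : (LinearPMap.mkSpanSingleton' (σ := RingHom.id ℝ) g (N g) Hsp).domain,
      LinearPMap.mkSpanSingleton' (σ := RingHom.id ℝ) g (N g) Hsp x ≤ N x := by
    rintro ⟨x, hx⟩
    have hx' : x ∈ (Submodule.span ℝ {g}) := by
      rwa [LinearPMap.domain_mkSpanSingleton] at hx
    obtain ⟨c, rfl⟩ := Submodule.mem_span_singleton.mp hx'
    rw [LinearPMap.mkSpanSingleton'_apply g (N g) Hsp c hx]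
    show c • N g ≤ N (c • g)
    rcases lt_trichotomy c 0 with h | h | h
    · have h0 : N ((c • g) + ((-c) • g)) = 0 := by
        rw [← add_smul, add_neg_cancel, zero_smul, N_zero]
      have ha := N_add (c • g) ((-c) • g)
      rw [h0, N_hom (-c) (neg_pos.mpr h) g] at ha
      have : c * N g ≤ N (c • g) := by nlinarith
      simpa [smul_eq_mul] using this
    · subst h; rw [zero_smul, zero_smul, N_zero]
    · rw [N_hom c h g]; simp [smul_eq_mul]
  obtain ⟨ulin, hext, hle⟩ :=
    exists_extension_of_le_sublinear (LinearPMap.mkSpanSingleton' (σ := RingHom.id ℝ) g (N g) Hsp) N N_hom N_add hfd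
  have hg_mem : g ∈ (LinearPMap.mkSpanSingleton' (σ := RingHom.id ℝ) g (N g) Hsp).domain := by
    rw [LinearPMap.domain_mkSpanSingleton]
    exact Submodule.mem_span_singleton_self g
  have hval : ulin g = N g := by
    have h := hext ⟨g, hg_mem⟩
    rw [LinearPMap.mkSpanSingleton'_apply_self] at h
    exact h
  have habs : ∀ x : F, |ulin x| ≤ K * p 0 x := by
    intro x
    rw [abs_le]
    refine ⟨?_, (hle x).trans (hNle x)⟩
    have h1 := (hle (-x)).trans (hNle (-x))
    rw [map_neg, map_neg_eq_map] at h1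
    linarith
  have hp0 : Continuous (p 0) := hsp.continuous_seminorm 0
  have hcont : Continuous ulin := by
    apply continuous_of_continuousAt_zero ulin
    have hb1 : Tendsto (fun x : F => K * p 0 x) (𝓝 0) (𝓝 0) := by
      have h := (hp0.tendsto 0).const_mul K
      simpa using h
    have hb2 : Tendsto (fun x : F => -(K * p 0 x)) (𝓝 0) (𝓝 0) := by
      simpa using hb1.neg
    have h : Tendsto (fun x : F => ulin x) (𝓝 0) (𝓝 0) :=
      tendsto_of_tendsto_of_tendsto_of_le_of_le hb2 hb1
        (fun x => (abs_le.1 (habs x)).1) (fun x => (abs_le.1 (habs x)).2)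
    simpa [ContinuousAt, map_zero] using h
  let uc : WeakDual ℝ F := { toLinearMap := ulin, cont := hcont }
  constructor
  · exact ⟨uc, fun g' => hle g', hval⟩
  · rintro y ⟨u, hu, rfl⟩
    exact hu g
end

section
/- Let φ : F → ℝ be locally Lipschitz. Suppose (f_j) is a sequence in F with f_j → f, and (g_j) is a sequence in F' with g_j ∈ ∂φ(f_j) for each j. If g ∈ F' is a weak* cluster point of the sequence (g_j), then g ∈ ∂φ(f). -/
/- Setting: `F` (and `E`) are Fréchet spaces: complete topological vector spaces over ℝ
whose topology is generated by an increasing sequence of seminorms `p 0 ≤ p 1 ≤ ⋯`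
(`Monotone p` together with `WithSeminorms p`).  The first seminorm of the family,
written `‖·‖¹` in the paper, is `p 0`.  The dual `F'` with its weak* topology is
`WeakDual ℝ F`. -/

open Filter Topology

/-- closedness of the subdifferential under weak* cluster points along
convergent sequences. -/
theorem clarkeSubdiff_mem_of_clusterPt
    {F : Type*} [AddCommGroup F] [Module ℝ F] [UniformSpace F] [IsUniformAddGroup F]
    [ContinuousSMul ℝ F] [CompleteSpace F]
    (p : ℕ → Seminorm ℝ F) (hmono : Monotone p) (hsp : WithSeminorms p)
    (φ : F → ℝ) (hφ : LocLip p φ)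
    (fseq : ℕ → F) (gseq : ℕ → WeakDual ℝ F) (f : F) (g : WeakDual ℝ F)
    (hmem : ∀ j, gseq j ∈ clarkeSubdiff φ (fseq j))
    (hf : Filter.Tendsto fseq Filter.atTop (𝓝 f))
    (hg : MapClusterPt g Filter.atTop gseq) :
    g ∈ clarkeSubdiff φ f := by
  intro v
  set Q : F × ℝ → ℝ := fun q => (φ (q.1 + q.2 • v) - φ q.1) / q.2 with hQ
  set L : ℝ := clarkeDeriv φ f v with hL
  -- reduce to: ∀ ε > 0, g v ≤ L + ε
  refine le_of_forall_pos_le_add fun ε hε => ?_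
  obtain ⟨U, hU, K, hK0, hK⟩ := hφ f
  set l : Filter (F × ℝ) := (𝓝 f) ×ˢ (𝓝[>] (0 : ℝ)) with hl
  have hne : l.NeBot := by exact Filter.prod_neBot.mpr ⟨inferInstance, inferInstance⟩
  -- eventual two-sided bound
  have h1 : Filter.Tendsto (fun q : F × ℝ => q.1) l (𝓝 f) := Filter.tendsto_fst
  have h2 : Filter.Tendsto (fun q : F × ℝ => q.1 + q.2 • v) l (𝓝 f) := by
    have : Filter.Tendsto (fun q : F × ℝ => q.1 + q.2 • v) l (𝓝 (f + (0:ℝ) • v)) :=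
      Filter.tendsto_fst.add
        ((Filter.tendsto_snd.mono_right nhdsWithin_le_nhds).smul_const v)
    simpa using this
  have h3 : ∀ᶠ q : F × ℝ in l, 0 < q.2 :=
    Filter.tendsto_snd.eventually (eventually_mem_nhdsWithin)
  have hbd : ∀ᶠ q : F × ℝ in l, |Q q| ≤ K * (p 0) v := by
    filter_upwards [h1.eventually_mem hU, h2.eventually_mem hU, h3] with q hq1 hq2 hqt
    have hle : |φ (q.1 + q.2 • v) - φ q.1| ≤ K * (q.2 * (p 0) v) := by
      have := hK _ hq2 _ hq1
      have heq : (p 0) (q.1 + q.2 • v - q.1) = q.2 * (p 0) v := by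
        rw [add_sub_cancel_left, map_smul_eq_mul, Real.norm_eq_abs, abs_of_pos hqt]
      rw [heq] at this; exact this
    have : |Q q| = |φ (q.1 + q.2 • v) - φ q.1| / q.2 := by
      rw [hQ]; simp [abs_div, abs_of_pos hqt]
    rw [this, div_le_iff₀ hqt]
    calc |φ (q.1 + q.2 • v) - φ q.1| ≤ K * (q.2 * (p 0) v) := hle
      _ = K * (p 0) v * q.2 := by ring
  -- the limsup L is finite-ish: eventually Q < L + ε
  have hbddabove : l.IsBoundedUnder (· ≤ ·) Q :=
    ⟨K * (p 0) v, hbd.mono fun q h => (le_abs_self _).trans h⟩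
  have hlt : ∀ᶠ q in l, Q q < L + ε := by
    have : Filter.limsup Q l < L + ε := by
      have : Filter.limsup Q l = L := rfl
      rw [this]; linarith
    exact Filter.eventually_lt_of_limsup_lt this hbddabove
  -- extract a product-shaped witness
  have hall : ∀ᶠ q in l, |Q q| ≤ K * (p 0) v ∧ Q q < L + ε := hbd.and hlt
  rw [hl, Filter.eventually_prod_iff] at hall
  obtain ⟨pa, hpa, pb, hpb, himp⟩ := hall
  -- eventually in j : bound clarkeDeriv φ (fseq j) v
  have hjev : ∀ᶠ j in Filter.atTop, (gseq j) v ≤ L + ε := by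
    have hint : ∀ᶠ j in Filter.atTop, fseq j ∈ interior {h | pa h} :=
      hf.eventually_mem (isOpen_interior.mem_nhds (mem_interior_iff_mem_nhds.mpr hpa))
    filter_upwards [hint] with j hj
    have hpaj : ∀ᶠ h in 𝓝 (fseq j), pa h :=
      mem_interior_iff_mem_nhds.mp hj
    have hevj : ∀ᶠ q : F × ℝ in (𝓝 (fseq j)) ×ˢ (𝓝[>] (0:ℝ)),
        |Q q| ≤ K * (p 0) v ∧ Q q < L + ε :=
      Filter.eventually_prod_iff.mpr ⟨pa, hpaj, pb, hpb, fun ha _ hb => himp ha hb⟩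
    have hnej : ((𝓝 (fseq j)) ×ˢ (𝓝[>] (0:ℝ))).NeBot :=
      Filter.prod_neBot.mpr ⟨inferInstance, inferInstance⟩
    have hco : Filter.IsCoboundedUnder (· ≤ ·) ((𝓝 (fseq j)) ×ˢ (𝓝[>] (0:ℝ))) Q :=
      Filter.isCoboundedUnder_le_of_eventually_le _
        (hevj.mono fun q h => (neg_abs_le (Q q)).trans' (neg_le_neg h.1))
    have hcd : clarkeDeriv φ (fseq j) v ≤ L + ε :=
      Filter.limsup_le_of_le hco (hevj.mono fun q h => h.2.le)
    exact (hmem j v).trans hcd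
  -- use the cluster point
  by_contra hcon
  push_neg at hcon
  have hgv : MapClusterPt (g v) Filter.atTop (fun j => (gseq j) v) :=
    hg.continuousAt_comp (WeakDual.eval_continuous v).continuousAt
  have hfreq : ∃ᶠ j in Filter.atTop, L + ε < (gseq j) v := by
    have := mapClusterPt_iff_frequently.mp hgv (Set.Ioi (L + ε)) (isOpen_Ioi.mem_nhds hcon)
    exact this
  obtain ⟨j, hj1, hj2⟩ := (hfreq.and_eventually hjev).exists
  linarith
end

section
/- Let φ : F → ℝ be locally Lipschitz and let C([0,1];F) be the Fréchet space of continuous paths with seminorms ‖γ‖ⁱ' = sup_{t∈[0,1]} ‖γ(t)‖ⁱ. Then the function Ψ : C([0,1];F) → ℝ defined by Ψ(γ) = max_{t∈[0,1]} φ(γ(t)) is locally Lipschitz. -/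
/- Setting: `F` (and `E`) are Fréchet spaces: complete topological vector spaces over ℝ
whose topology is generated by an increasing sequence of seminorms `p 0 ≤ p 1 ≤ ⋯`
(`Monotone p` together with `WithSeminorms p`).  The first seminorm of the family,
written `‖·‖¹` in the paper, is `p 0`.  The dual `F'` with its weak* topology is
`WeakDual ℝ F`. -/

open Filter Topology

open Pointwise Uniformity in
/-- `Ψ(γ) = max_{t∈[0,1]} φ(γ(t))` is locally Lipschitz on `C([0,1];F)`
(with respect to the sup-seminorm `‖γ‖¹' = sup_t ‖γ t‖¹`). -/
theorem maxOnPath_locallyLipschitz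
    {F : Type*} [AddCommGroup F] [Module ℝ F] [UniformSpace F] [IsUniformAddGroup F]
    [ContinuousSMul ℝ F] [CompleteSpace F]
    (p : ℕ → Seminorm ℝ F) (hmono : Monotone p) (hsp : WithSeminorms p)
    (φ : F → ℝ) (hφ : LocLip p φ) :
    ∀ γ₀ : C(unitInterval, F), ∃ U ∈ 𝓝 γ₀, ∃ K : ℝ, 0 ≤ K ∧
      ∀ γ₁ ∈ U, ∀ γ₂ ∈ U,
        |(⨆ t : unitInterval, φ (γ₁ t)) - ⨆ t : unitInterval, φ (γ₂ t)| ≤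
          K * ⨆ t : unitInterval, (p 0) (γ₁ t - γ₂ t) := by
  intro γ₀
  have hp0 : Continuous (p 0) := hsp.continuous_seminorm 0
  -- φ is continuous
  have hφc : Continuous φ := by
    rw [continuous_iff_continuousAt]
    intro x
    obtain ⟨U, hU, K, hK0, hK⟩ := hφ x
    have h1 : Tendsto (fun a => K * p 0 (a - x)) (𝓝 x) (𝓝 0) := by
      have : Tendsto (fun a => K * p 0 (a - x)) (𝓝 x) (𝓝 (K * p 0 (x - x))) :=
        (tendsto_const_nhds.mul ((hp0.comp (continuous_id.sub continuous_const)).tendsto x))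
      simpa using this
    have h2 : Tendsto (fun a => |φ a - φ x|) (𝓝 x) (𝓝 0) := by
      refine squeeze_zero' (Eventually.of_forall fun a => abs_nonneg _) ?_ h1
      filter_upwards [hU] with a ha
      exact hK a ha x (mem_of_mem_nhds hU)
    have h3 : Tendsto (fun a => φ a - φ x) (𝓝 x) (𝓝 0) :=
      (tendsto_zero_iff_abs_tendsto_zero _).2 h2
    have := h3.add (tendsto_const_nhds (x := φ x))
    simpa [ContinuousAt] using this
  -- key local data
  have key : ∀ t : unitInterval, ∃ N : Set F, N ∈ 𝓝 (0:F) ∧ ∃ K : ℝ, 0 ≤ K ∧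
      ∀ a b : F, a - γ₀ t ∈ N + N → b - γ₀ t ∈ N + N → |φ a - φ b| ≤ K * p 0 (a - b) := by
    intro t
    obtain ⟨U, hU, K, hK0, hK⟩ := hφ (γ₀ t)
    have hW : (fun y : F => γ₀ t + y) ⁻¹' U ∈ 𝓝 (0:F) := by
      apply (continuous_const.add continuous_id).continuousAt.preimage_mem_nhds
      simpa using hU
    obtain ⟨V, hV, hVV⟩ := exists_nhds_zero_half hW
    refine ⟨V, hV, K, hK0, fun a b ha hb => ?_⟩
    have hmem : ∀ c : F, c - γ₀ t ∈ V + V → c ∈ U := by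
      intro c hc
      obtain ⟨v, hv, w, hw, hvw⟩ := hc
      have hvw' : v + w = c - γ₀ t := hvw
      have := hVV v hv w hw
      have : γ₀ t + (v + w) ∈ U := this
      rwa [show γ₀ t + (v + w) = c by rw [hvw']; abel] at this
    exact hK a (hmem a ha) b (hmem b hb)
  choose N hN K hK0 hK using key
  -- compactness
  set T : unitInterval → Set unitInterval := fun t => (fun s => γ₀ s - γ₀ t) ⁻¹' N t with hT
  have hTnhds : ∀ t ∈ (Set.univ : Set unitInterval), T t ∈ 𝓝 t := by
    intro t _
    apply ((γ₀.continuous.sub continuous_const).continuousAt).preimage_mem_nhds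
    simpa using hN t
  obtain ⟨ts, -, hts⟩ := isCompact_univ.elim_nhds_subcover T (fun t _ => hTnhds t trivial)
  have htsne : ts.Nonempty := by
    rcases Finset.eq_empty_or_nonempty ts with h | h
    · exfalso
      have := hts (Set.mem_univ (⟨0, by norm_num, by norm_num⟩ : unitInterval))
      simp [h] at this
    · exact h
  set N₀ : Set F := ⋂ t ∈ ts, N t with hN₀def
  have hN₀ : N₀ ∈ 𝓝 (0:F) := (Filter.biInter_finset_mem ts).2 fun t _ => hN t
  set K₀ : ℝ := ts.sup' htsne K with hK₀def
  have hK₀0 : 0 ≤ K₀ := le_trans (hK0 htsne.choose) (Finset.le_sup' K htsne.choose_spec)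
  -- the neighborhood in C(I,F)
  set Uset : Set C(unitInterval, F) := {γ | ∀ s, γ s - γ₀ s ∈ N₀} with hUdef
  have hUnhds : Uset ∈ 𝓝 γ₀ := by
    have hV : {q : F × F | q.2 - q.1 ∈ N₀} ∈ 𝓤 F := by
      rw [uniformity_eq_comap_nhds_zero]
      exact preimage_mem_comap hN₀
    have hE : {fg : C(unitInterval, F) × C(unitInterval, F) |
        ∀ x ∈ (Set.univ : Set unitInterval), (fg.1 x, fg.2 x) ∈ {q : F × F | q.2 - q.1 ∈ N₀}} ∈
        𝓤 C(unitInterval, F) :=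
      ContinuousMap.hasBasis_compactConvergenceUniformity.mem_of_mem
        (i := (Set.univ, {q : F × F | q.2 - q.1 ∈ N₀})) ⟨isCompact_univ, hV⟩
    have := UniformSpace.ball_mem_nhds γ₀ hE
    refine mem_of_superset this ?_
    intro γ hγ s
    exact hγ s (Set.mem_univ s)
  refine ⟨Uset, hUnhds, K₀, hK₀0, fun γ₁ hγ₁ γ₂ hγ₂ => ?_⟩
  -- pointwise estimate
  have hpoint : ∀ s : unitInterval, |φ (γ₁ s) - φ (γ₂ s)| ≤ K₀ * p 0 (γ₁ s - γ₂ s) := by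
    intro s
    obtain ⟨t, hts', hst⟩ : ∃ t ∈ ts, s ∈ T t := by
      have := hts (Set.mem_univ s)
      simpa using this
    have hmem : ∀ γ : C(unitInterval, F), γ ∈ Uset → γ s - γ₀ t ∈ N t + N t := by
      intro γ hγ
      have h1 : γ s - γ₀ s ∈ N t := Set.mem_iInter₂.1 (hγ s) t hts'
      exact ⟨γ s - γ₀ s, h1, γ₀ s - γ₀ t, hst, by abel⟩
    calc |φ (γ₁ s) - φ (γ₂ s)| ≤ K t * p 0 (γ₁ s - γ₂ s) :=
          hK t (γ₁ s) (γ₂ s) (hmem γ₁ hγ₁) (hmem γ₂ hγ₂)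
      _ ≤ K₀ * p 0 (γ₁ s - γ₂ s) :=
          mul_le_mul_of_nonneg_right (Finset.le_sup' K hts') (apply_nonneg _ _)
  -- sup estimates
  set S : ℝ := ⨆ t : unitInterval, p 0 (γ₁ t - γ₂ t) with hSdef
  have hbddS : BddAbove (Set.range fun s : unitInterval => p 0 (γ₁ s - γ₂ s)) :=
    (isCompact_range (hp0.comp (γ₁.continuous.sub γ₂.continuous))).bddAbove
  have hS : ∀ s : unitInterval, p 0 (γ₁ s - γ₂ s) ≤ S := fun s => le_ciSup hbddS s
  have hbdd1 : BddAbove (Set.range fun s : unitInterval => φ (γ₁ s)) :=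
    (isCompact_range (hφc.comp γ₁.continuous)).bddAbove
  have hbdd2 : BddAbove (Set.range fun s : unitInterval => φ (γ₂ s)) :=
    (isCompact_range (hφc.comp γ₂.continuous)).bddAbove
  rw [abs_sub_le_iff]
  constructor
  · rw [sub_le_iff_le_add]
    refine ciSup_le fun s => ?_
    have h1 : φ (γ₁ s) - φ (γ₂ s) ≤ K₀ * S := by
      calc φ (γ₁ s) - φ (γ₂ s) ≤ |φ (γ₁ s) - φ (γ₂ s)| := le_abs_self _
        _ ≤ K₀ * p 0 (γ₁ s - γ₂ s) := hpoint s
        _ ≤ K₀ * S := mul_le_mul_of_nonneg_left (hS s) hK₀0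
    have h2 : φ (γ₂ s) ≤ ⨆ t : unitInterval, φ (γ₂ t) := le_ciSup hbdd2 s
    linarith
  · rw [sub_le_iff_le_add]
    refine ciSup_le fun s => ?_
    have h1 : φ (γ₂ s) - φ (γ₁ s) ≤ K₀ * S := by
      calc φ (γ₂ s) - φ (γ₁ s) ≤ |φ (γ₁ s) - φ (γ₂ s)| := by rw [abs_sub_comm]; exact le_abs_self _
        _ ≤ K₀ * p 0 (γ₁ s - γ₂ s) := hpoint s
        _ ≤ K₀ * S := mul_le_mul_of_nonneg_left (hS s) hK₀0
    have h2 : φ (γ₁ s) ≤ ⨆ t : unitInterval, φ (γ₁ t) := le_ciSup hbdd1 s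
    linarith
end
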